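/- Let 𝒜 be a 2-torsion-free ring (2x = 0 implies x = 0) possessing a left identity e (ex = x for all x ∈ 𝒜). Then every additive skew-centralizing map f of 𝒜, i.e. every additive map f : 𝒜 → 𝒜 with f(x)x + xf(x) ∈ Z(𝒜) for all x ∈ 𝒜, is a commuting map: f(x)x = xf(x) for all x ∈ 𝒜. -/

import Mathlib

/-- (Sharma–Dhara) Over a 2-torsion-free (not necessarily unital)
associative ring possessing a left identity, every additive skew-centralizing map is a
commuting map. -/
theorem skew_centralizing_is_commuting {A : Type*} [NonUnitalRing A]
    (htf : ∀ x : A, x + x = 0 → x = 0)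
    (e : A) (he : ∀ x : A, e * x = x)
    (f : A →+ A)
    (hf : ∀ x y : A, (f x * x + x * f x) * y = y * (f x * x + x * f x)) :
    ∀ x : A, f x * x = x * f x := by
  intro x
  set cE : A := f e * e + e * f e with hcE
  set cX : A := f x * x + x * f x with hcX
  set cS : A := f (x + e) * (x + e) + (x + e) * f (x + e) with hcS
  set B : A := cS - cX - cE with hB_def
  have hB : ∀ y : A, B * y = y * B := by
    intro y
    simp only [hB_def, hcS, hcX, hcE, sub_mul, mul_sub, hf]
  have hfx := hf x
  have hfe := hf e
  set k : A := f x * x - x * f x with hk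
  have main : k + k + (k + k) =
      ((B * x - x * B) + (B * x - x * B))
      + (x * (B * e - e * B) + x * (B * e - e * B))
      - (cE * x - x * cE) * x
      - x * ((cE * x - x * cE) * e)
      - ((x * x * (cE * e - e * cE) + x * x * (cE * e - e * cE))
         + (x * x * (cE * e - e * cE) + x * x * (cE * e - e * cE))) := by
    simp only [hk, hB_def, hcS, hcX, hcE, map_add, mul_add, add_mul, sub_mul,
      mul_sub, mul_assoc, he]
    abel
  have hce : ∀ y : A, cE * y = y * cE := by rw [hcE]; exact hf e
  have hzero : k + k + (k + k) = 0 := by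
    rw [main]
    simp only [hB, hce, sub_self, mul_zero, zero_mul, add_zero, zero_add, sub_zero,
      zero_sub, neg_zero]
  have h2 : k + k = 0 := htf _ hzero
  have h1 : k = 0 := htf _ h2
  have := sub_eq_zero.mp h1
  simpa [hk] using this
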